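/- Let $X$ be a smooth quasi-projective variety over $\mathbb{C}$ of dimension $n$ and let $J_\infty(X) = \varprojlim J_l(X)$ be the arc space with truncation maps $\pi_l : J_\infty(X) \to J_l(X)$, where each $j_l : J_{l+1}(X) \to J_l(X)$ is a Zariski locally trivial $\mathbb{C}^n$-bundle. Define a cylinder set as a preimage $\pi_l^{-1}(B)$ of a constructible set $B \subseteq J_l(X)$. If a cylinder set $C$ is contained in a countable union $\bigcup_{i=1}^{\infty} C_i$ of cylinder sets, then there is a positive integer $m$ with $C \subseteq \bigcup_{i=1}^{m} C_i$. -/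

import Mathlib

set_option maxHeartbeats 1000000
set_option synthInstance.maxHeartbeats 400000



/-- A Zariski locally closed subset of affine space `ℂ^ι`: common zeros of a finite
set of polynomials minus the zero set of another polynomial. -/
def IsAffineLocallyClosed {ι : Type} [Fintype ι] (s : Set (ι → ℂ)) : Prop :=
  ∃ (P : Finset (MvPolynomial ι ℂ)) (q : MvPolynomial ι ℂ),
    s = {x | (∀ p ∈ P, MvPolynomial.eval x p = 0) ∧ MvPolynomial.eval x q ≠ 0}

/-- A constructible subset of `ℂ^ι`: a finite union of locally closed subsets. -/
def IsAffineConstructible {ι : Type} [Fintype ι] (s : Set (ι → ℂ)) : Prop :=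
  ∃ S : Finset (Set (ι → ℂ)), (∀ u ∈ S, IsAffineLocallyClosed u) ∧ s = ⋃ u ∈ S, u

/-- The truncation map `π_l : J_∞(𝔸ⁿ) → J_l(𝔸ⁿ)`, sending an arc (an `n`-tuple of
formal power series) to its coefficients up to order `l`. -/
noncomputable def arcTrunc (n l : ℕ) (y : Fin n → PowerSeries ℂ) : Fin n × Fin (l + 1) → ℂ :=
  fun p => PowerSeries.coeff (p.2 : ℕ) (y p.1)

/-- A cylinder set in the arc space `J_∞(𝔸ⁿ)`: the preimage under some truncation
`π_l` of a constructible subset of `J_l(𝔸ⁿ)`. -/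
def IsCylinderSet (n : ℕ) (C : Set (Fin n → PowerSeries ℂ)) : Prop :=
  ∃ (l : ℕ) (B : Set (Fin n × Fin (l + 1) → ℂ)),
    IsAffineConstructible B ∧ C = arcTrunc n l ⁻¹' B

open Cardinal in
lemma exists_embedding_fixing (F : Subfield ℂ) (M : Type) [Field M] [Algebra F M]
    (hM : #M ≤ ℵ₀) :
    ∃ σ : M →+* ℂ, ∀ a : F, σ (algebraMap F M a) = (a : ℂ) := by
  obtain ⟨s, hs⟩ := exists_isTranscendenceBasis F M
  obtain ⟨t, ht⟩ := exists_isTranscendenceBasis F ℂ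
  have hFc : #F ≤ ℵ₀ := hM.trans' (mk_le_of_injective (algebraMap F M).injective)
  have htu : ¬ (#t ≤ ℵ₀) := by
    intro hct
    haveI h1 : Algebra.IsAlgebraic (Algebra.adjoin F (Set.range ((↑) : t → ℂ))) ℂ :=
      ht.isAlgebraic
    have h2 : #(Algebra.adjoin F (Set.range ((↑) : t → ℂ))) ≤ ℵ₀ := by
      rw [Algebra.adjoin_eq_range]
      refine (mk_range_le.trans ?_)
      refine MvPolynomial.cardinalMk_le_max.trans ?_
      exact max_le (max_le hFc (mk_range_le.trans hct)) le_rfl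
    have h3 := Algebra.IsAlgebraic.cardinalMk_le_max
      (Algebra.adjoin F (Set.range ((↑) : t → ℂ))) ℂ
    rw [mk_complex] at h3
    have h5 : (𝔠 : Cardinal) ≤ ℵ₀ := h3.trans (max_le h2 le_rfl)
    exact absurd (aleph0_lt_continuum.trans_le h5) (lt_irrefl _)
  obtain ⟨e⟩ : Nonempty (s ↪ t) := by
    rw [← Cardinal.le_def]
    exact ((mk_set_le s).trans hM).trans (not_le.1 htu).le
  have hw : AlgebraicIndependent F (((↑) : t → ℂ) ∘ e) := ht.1.comp e e.injective
  set R := Algebra.adjoin F (Set.range ((↑) : s → M)) with hR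
  let φ₀ : R →ₐ[F] ℂ := (MvPolynomial.aeval (((↑) : t → ℂ) ∘ e)).comp hs.1.repr
  have hφ₀inj : Function.Injective φ₀ := by
    have h1 : Function.Injective (MvPolynomial.aeval (R := F) (((↑) : t → ℂ) ∘ e)) :=
      algebraicIndependent_iff_injective_aeval.mp hw
    intro a b hab
    have h2 : hs.1.repr a = hs.1.repr b := h1 hab
    have h3 := congrArg (MvPolynomial.aeval ((↑) : s → M)) h2
    simp only [hs.1.aeval_repr] at h3
    exact Subtype.ext h3
  letI : Algebra R ℂ := φ₀.toRingHom.toAlgebra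
  haveI : FaithfulSMul R ℂ := (faithfulSMul_iff_algebraMap_injective R ℂ).mpr hφ₀inj
  haveI : FaithfulSMul R M :=
    (faithfulSMul_iff_algebraMap_injective R M).mpr Subtype.val_injective
  haveI : Algebra.IsAlgebraic R M := hs.isAlgebraic
  let σ' : M →ₐ[R] ℂ := IsAlgClosed.lift
  refine ⟨σ'.toRingHom, fun a => ?_⟩
  have h4 : algebraMap F M a = algebraMap R M (algebraMap F R a) :=
    (IsScalarTower.algebraMap_apply F R M a)
  show σ' (algebraMap F M a) = (a : ℂ)
  rw [h4, σ'.commutes]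
  show φ₀ (algebraMap F R a) = (a : ℂ)
  rw [φ₀.commutes]
  rfl

open Filter in
lemma ultra_exists {α : Type*} (U : Ultrafilter ℕ) (T : Finset α) {s : Set ℕ}
    (hs : s ∈ U) (Q : α → ℕ → Prop) (h : ∀ k ∈ s, ∃ a ∈ T, Q a k) :
    ∃ a ∈ T, {k | Q a k} ∈ U := by
  have hsub : s ⊆ ⋃ a ∈ (T : Set α), {k | Q a k} := fun k hk => by
    obtain ⟨a, ha, hq⟩ := h k hk
    exact Set.mem_biUnion ha hq
  have hmem : (⋃ a ∈ (T : Set α), {k | Q a k}) ∈ U := Filter.mem_of_superset hs hsub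
  rw [Ultrafilter.finite_biUnion_mem_iff T.finite_toSet] at hmem
  exact hmem

/-- The constant embedding of `ℂ` into the ultraproduct. -/
noncomputable def cgerm (U : Ultrafilter ℕ) : ℂ →+* Filter.Germ (U : Filter ℕ) ℂ :=
  (Filter.Germ.coeRingHom _).comp (Pi.constRingHom ℕ ℂ)

lemma pi_eval₂ {ι : Type} (p : MvPolynomial ι ℂ) (v : ι → ℕ → ℂ) :
    MvPolynomial.eval₂ (Pi.constRingHom ℕ ℂ) v p
      = fun k => MvPolynomial.eval (fun j => v j k) p := by
  funext k
  have h := MvPolynomial.eval₂_comp_left (Pi.evalRingHom (fun _ : ℕ => ℂ) k)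
    (Pi.constRingHom ℕ ℂ) v p
  have h2 : (Pi.evalRingHom (fun _ : ℕ => ℂ) k).comp (Pi.constRingHom ℕ ℂ) = RingHom.id ℂ :=
    RingHom.ext fun _ => rfl
  rw [h2] at h
  simpa [MvPolynomial.eval₂_id, Function.comp_def] using h

lemma germ_eval₂ {ι : Type} (U : Ultrafilter ℕ) (p : MvPolynomial ι ℂ) (v : ι → ℕ → ℂ) :
    MvPolynomial.eval₂ (cgerm U) (fun j => ((v j : Filter.Germ (U : Filter ℕ) ℂ))) p
      = ((fun k => MvPolynomial.eval (fun j => v j k) p : ℕ → ℂ) :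
          Filter.Germ (U : Filter ℕ) ℂ) := by
  have h := MvPolynomial.eval₂_comp_left (Filter.Germ.coeRingHom (U : Filter ℕ))
    (Pi.constRingHom ℕ ℂ) v p
  rw [pi_eval₂] at h
  exact h.symm

lemma mapdown {ι : Type} (F : Subfield ℂ) (p : MvPolynomial ι ℂ)
    (h : ∀ m, MvPolynomial.coeff m p ∈ F) :
    ∃ p₀ : MvPolynomial ι F, MvPolynomial.map (F.subtype : F →+* ℂ) p₀ = p := by
  classical
  refine ⟨p.support.sum (fun m => MvPolynomial.monomial m (⟨p.coeff m, h m⟩ : F)), ?_⟩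
  rw [map_sum]
  simp only [MvPolynomial.map_monomial]
  simpa using MvPolynomial.support_sum_monomial_coeff p

/-- Coefficients of a multivariate polynomial, as a set. -/
def polyCoeffs {ι : Type} (p : MvPolynomial ι ℂ) : Set ℂ :=
  Set.range fun m => MvPolynomial.coeff m p

lemma polyCoeffs_countable {ι : Type} [Countable ι] (p : MvPolynomial ι ℂ) :
    (polyCoeffs p).Countable :=
  Set.countable_range _

lemma germ_coe_eq_zero (U : Ultrafilter ℕ) (g : ℕ → ℂ) :
    ((g : Filter.Germ (U : Filter ℕ) ℂ) = 0) ↔ {k | g k = 0} ∈ U := by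
  rw [show (0 : Filter.Germ (U : Filter ℕ) ℂ) = ((fun _ => (0:ℂ)) : ℕ → ℂ) from rfl,
    Filter.Germ.coe_eq]
  exact Filter.eventually_iff

/-- Compactness property of cylinder sets in arc spaces: a cylinder set contained
in a countable union of cylinder sets is contained in a finite subunion. -/
theorem stmt14 (n : ℕ) (C : Set (Fin n → PowerSeries ℂ))
    (Ci : ℕ → Set (Fin n → PowerSeries ℂ))
    (hC : IsCylinderSet n C) (hCi : ∀ i, IsCylinderSet n (Ci i))
    (hsub : C ⊆ ⋃ i, Ci i) :
    ∃ m : ℕ, C ⊆ ⋃ i ∈ Finset.range (m + 1), Ci i := by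
  classical
  by_contra hcon
  push_neg at hcon
  have hy : ∀ m : ℕ, ∃ yy, yy ∈ C ∧ ∀ i ≤ m, yy ∉ Ci i := by
    intro m
    obtain ⟨yy, hyC, hyn⟩ := Set.not_subset.mp (hcon m)
    exact ⟨yy, hyC, fun i him hmem =>
      hyn (Set.mem_biUnion (Finset.mem_range.mpr (Nat.lt_succ_of_le him)) hmem)⟩
  choose y hyC hyn using hy
  obtain ⟨l, B, hBc, hCeq⟩ := hC
  obtain ⟨S, hSlc, hBeq⟩ := hBc
  choose! P q hPq using hSlc
  choose li Bi hBic hCieq using hCi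
  choose Si hSilc hBieq using hBic
  choose! Pi qi hPiqi using hSilc
  -- the countable coefficient field F
  set cset : Set ℂ :=
    (⋃ u ∈ S, (polyCoeffs (q u) ∪ ⋃ p ∈ P u, polyCoeffs p)) ∪
      (⋃ i : ℕ, ⋃ u ∈ Si i, (polyCoeffs (qi i u) ∪ ⋃ p ∈ Pi i u, polyCoeffs p)) with hcset
  have hcsetc : cset.Countable := by
    apply Set.Countable.union
    · refine Set.Countable.biUnion (S.countable_toSet) (fun u _ => ?_)
      exact (polyCoeffs_countable _).union
        (Set.Countable.biUnion ((P u).countable_toSet) fun p _ => polyCoeffs_countable _)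
    · refine Set.countable_iUnion (fun i => ?_)
      refine Set.Countable.biUnion ((Si i).countable_toSet) (fun u _ => ?_)
      exact (polyCoeffs_countable _).union
        (Set.Countable.biUnion ((Pi i u).countable_toSet) fun p _ => polyCoeffs_countable _)
  set F : Subfield ℂ := Subfield.closure cset with hF
  have hFc : (Cardinal.mk F) ≤ Cardinal.aleph0 := by
    refine (Subfield.cardinalMk_closure_le_max cset).trans (max_le ?_ le_rfl)
    exact Cardinal.mk_le_aleph0_iff.mpr hcsetc.to_subtype
  -- coefficients of the relevant polynomials lie in F
  have hqF : ∀ u ∈ S, ∀ m, MvPolynomial.coeff m (q u) ∈ F := fun u hu m =>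
    Subfield.subset_closure (Set.mem_union_left _
      (Set.mem_iUnion₂.mpr ⟨u, hu, Set.mem_union_left _ ⟨m, rfl⟩⟩))
  have hPF : ∀ u ∈ S, ∀ p ∈ P u, ∀ m, MvPolynomial.coeff m p ∈ F := fun u hu p hp m =>
    Subfield.subset_closure (Set.mem_union_left _
      (Set.mem_iUnion₂.mpr ⟨u, hu, Set.mem_union_right _ (Set.mem_iUnion₂.mpr ⟨p, hp, m, rfl⟩)⟩))
  have hqiF : ∀ i, ∀ u ∈ Si i, ∀ m, MvPolynomial.coeff m (qi i u) ∈ F := fun i u hu m =>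
    Subfield.subset_closure (Set.mem_union_right _
      (Set.mem_iUnion.mpr ⟨i, Set.mem_iUnion₂.mpr ⟨u, hu, Set.mem_union_left _ ⟨m, rfl⟩⟩⟩))
  have hPiF : ∀ i, ∀ u ∈ Si i, ∀ p ∈ Pi i u, ∀ m, MvPolynomial.coeff m p ∈ F :=
    fun i u hu p hp m =>
    Subfield.subset_closure (Set.mem_union_right _
      (Set.mem_iUnion.mpr ⟨i, Set.mem_iUnion₂.mpr ⟨u, hu, Set.mem_union_right _
        (Set.mem_iUnion₂.mpr ⟨p, hp, m, rfl⟩)⟩⟩))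
  -- the ultrafilter and ultrapower
  let U : Ultrafilter ℕ := Ultrafilter.of Filter.atTop
  have hUat : ∀ i : ℕ, {k : ℕ | i ≤ k} ∈ U := fun i =>
    (Ultrafilter.of_le Filter.atTop) (Filter.mem_atTop i)
  let K := Filter.Germ (U : Filter ℕ) ℂ
  let zfun : Fin n → ℕ → ℕ → ℂ := fun a b k => PowerSeries.coeff b (y k a)
  let zg : Fin n → ℕ → K := fun a b => (zfun a b : K)
  set M : Subfield K := Subfield.closure
    ((cgerm U) '' (F : Set ℂ) ∪ Set.range (fun ab : Fin n × ℕ => zg ab.1 ab.2)) with hM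
  have hMc : (Cardinal.mk M) ≤ Cardinal.aleph0 := by
    refine (Subfield.cardinalMk_closure_le_max _).trans (max_le ?_ le_rfl)
    refine Cardinal.mk_le_aleph0_iff.mpr (Set.Countable.to_subtype ?_)
    exact ((Cardinal.mk_le_aleph0_iff.mp hFc).to_set.image _).union (Set.countable_range _)
  have hzM : ∀ a b, zg a b ∈ M := fun a b =>
    Subfield.subset_closure (Or.inr ⟨(a, b), rfl⟩)
  have hFM : ∀ c : F, cgerm U (c : ℂ) ∈ M := fun c =>
    Subfield.subset_closure (Or.inl ⟨(c : ℂ), c.2, rfl⟩)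
  let f0 : F →+* M := RingHom.codRestrict ((cgerm U).comp F.subtype) M fun a => hFM a
  letI : Algebra F M := f0.toAlgebra
  obtain ⟨σ, hσ⟩ := exists_embedding_fixing F M hMc
  have hσf0 : ∀ a : F, σ (f0 a) = (a : ℂ) := hσ
  -- the limit arc
  let wM : ∀ l' : ℕ, (Fin n × Fin (l' + 1)) → M := fun l' j => ⟨zg j.1 (j.2 : ℕ), hzM _ _⟩
  let Y : Fin n → PowerSeries ℂ := fun a => PowerSeries.mk fun b => σ ⟨zg a b, hzM a b⟩
  have hYtr : ∀ l' : ℕ, arcTrunc n l' Y = fun j => σ (wM l' j) := by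
    intro l'
    funext j
    simp only [arcTrunc, Y, PowerSeries.coeff_mk, wM]
  -- the key transfer principle
  have KEY : ∀ (l' : ℕ) (p : MvPolynomial (Fin n × Fin (l' + 1)) ℂ),
      (∀ m, MvPolynomial.coeff m p ∈ F) →
      (MvPolynomial.eval (arcTrunc n l' Y) p = 0 ↔
        {k | MvPolynomial.eval (arcTrunc n l' (y k)) p = 0} ∈ U) := by
    intro l' p hp
    obtain ⟨p₀, hp₀⟩ := mapdown F p hp
    set mval : M := MvPolynomial.eval₂ f0 (wM l') p₀ with hmval
    have ha : (M.subtype) mval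
        = MvPolynomial.eval₂ (cgerm U) (fun j => zg j.1 (j.2 : ℕ)) p := by
      rw [hmval, MvPolynomial.eval₂_comp_left M.subtype f0 (wM l') p₀, ← hp₀,
        MvPolynomial.eval₂_map]
      rfl
    have hb : MvPolynomial.eval₂ (cgerm U) (fun j => zg j.1 (j.2 : ℕ)) p
        = ((fun k => MvPolynomial.eval (arcTrunc n l' (y k)) p : ℕ → ℂ) : K) := by
      have h := germ_eval₂ U p (fun j => zfun j.1 (j.2 : ℕ))
      exact h
    have hc : MvPolynomial.eval (arcTrunc n l' Y) p = σ mval := by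
      rw [hYtr l', hmval, MvPolynomial.eval₂_comp_left σ f0 (wM l') p₀]
      have hcomp : σ.comp f0 = F.subtype := RingHom.ext fun a => hσf0 a
      rw [hcomp, ← hp₀, MvPolynomial.eval_map]
      rfl
    rw [hc]
    constructor
    · intro h0
      have h1 : mval = 0 := by
        apply σ.injective
        rw [h0, map_zero]
      have h2 : (M.subtype) mval = 0 := by rw [h1, map_zero]
      rw [ha, hb] at h2
      exact (germ_coe_eq_zero U _).mp h2
    · intro hU0
      have h2 : (M.subtype) mval = 0 := by
        rw [ha, hb]
        exact (germ_coe_eq_zero U _).mpr hU0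
      have h1 : mval = 0 := Subtype.ext h2
      rw [h1, map_zero]
  -- Y belongs to C
  have hYC : Y ∈ C := by
    have hyB : ∀ k, ∃ u ∈ S, arcTrunc n l (y k) ∈ u := by
      intro k
      have h := hyC k
      rw [hCeq, Set.mem_preimage, hBeq] at h
      obtain ⟨u, hu, hx⟩ := Set.mem_iUnion₂.mp h
      exact ⟨u, hu, hx⟩
    obtain ⟨u, huS, hA⟩ := ultra_exists U S (Filter.univ_mem)
      (fun u k => arcTrunc n l (y k) ∈ u) (fun k _ => hyB k)
    have hu' := hPq u huS
    have h1 : ∀ p ∈ P u, MvPolynomial.eval (arcTrunc n l Y) p = 0 := by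
      intro p hp
      refine (KEY l p (hPF u huS p hp)).mpr ?_
      refine Filter.mem_of_superset hA fun k hk => ?_
      have hk' : arcTrunc n l (y k) ∈ u := hk
      rw [hu'] at hk'
      exact hk'.1 p hp
    have h2 : MvPolynomial.eval (arcTrunc n l Y) (q u) ≠ 0 := by
      intro h0
      have hz := (KEY l (q u) (hqF u huS)).mp h0
      have hne : {k | MvPolynomial.eval (arcTrunc n l (y k)) (q u) ≠ 0} ∈ U := by
        refine Filter.mem_of_superset hA fun k hk => ?_
        have hk' : arcTrunc n l (y k) ∈ u := hk
        rw [hu'] at hk'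
        exact hk'.2
      obtain ⟨k, hk1, hk2⟩ := Filter.nonempty_of_mem (Filter.inter_mem hz hne)
      exact hk2 hk1
    rw [hCeq]
    refine Set.mem_preimage.mpr ?_
    rw [hBeq]
    refine Set.mem_iUnion₂.mpr ⟨u, huS, ?_⟩
    rw [hu']
    exact ⟨h1, h2⟩
  -- Y belongs to no Ci
  have hYnot : ∀ i, Y ∉ Ci i := by
    intro i hYin
    rw [hCieq i, Set.mem_preimage, hBieq i] at hYin
    obtain ⟨u, huS, hYu⟩ := Set.mem_iUnion₂.mp hYin
    have hu' := hPiqi i u huS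
    rw [hu', Set.mem_setOf_eq] at hYu
    set T : Finset (Option (MvPolynomial (Fin n × Fin (li i + 1)) ℂ)) :=
      insert none ((Pi i u).image some) with hT
    let Q : Option (MvPolynomial (Fin n × Fin (li i + 1)) ℂ) → ℕ → Prop := fun a k =>
      a.elim (MvPolynomial.eval (arcTrunc n (li i) (y k)) (qi i u) = 0)
        (fun p => p ∈ Pi i u ∧ MvPolynomial.eval (arcTrunc n (li i) (y k)) p ≠ 0)
    have halt : ∀ k ∈ {k : ℕ | i ≤ k}, ∃ a ∈ T, Q a k := by
      intro k hk
      have hnot : y k ∉ Ci i := hyn k i hk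
      have hnB : arcTrunc n (li i) (y k) ∉ Bi i := by
        intro hmem
        exact hnot (by rw [hCieq i]; exact hmem)
      have hnu : arcTrunc n (li i) (y k) ∉ u := by
        intro huu
        exact hnB (by rw [hBieq i]; exact Set.mem_iUnion₂.mpr ⟨u, huS, huu⟩)
      rw [hu', Set.mem_setOf_eq] at hnu
      by_cases hq0 : MvPolynomial.eval (arcTrunc n (li i) (y k)) (qi i u) = 0
      · exact ⟨none, Finset.mem_insert_self _ _, hq0⟩
      · have hnall : ¬ ∀ p ∈ Pi i u, MvPolynomial.eval (arcTrunc n (li i) (y k)) p = 0 :=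
          fun hall => hnu ⟨hall, hq0⟩
        push_neg at hnall
        obtain ⟨p, hpmem, hpne⟩ := hnall
        exact ⟨some p, Finset.mem_insert_of_mem (Finset.mem_image_of_mem some hpmem),
          hpmem, hpne⟩
    obtain ⟨a, haT, haU⟩ := ultra_exists U T (hUat i) Q halt
    cases a with
    | none =>
      have h0 : MvPolynomial.eval (arcTrunc n (li i) Y) (qi i u) = 0 :=
        (KEY (li i) (qi i u) (hqiF i u huS)).mpr haU
      exact hYu.2 h0
    | some p =>
      have hpmem : p ∈ Pi i u := by
        obtain ⟨k, hk⟩ := Filter.nonempty_of_mem haU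
        exact hk.1
      have hne : {k | MvPolynomial.eval (arcTrunc n (li i) (y k)) p ≠ 0} ∈ U :=
        Filter.mem_of_superset haU fun k hk => hk.2
      have h0 : MvPolynomial.eval (arcTrunc n (li i) Y) p = 0 := hYu.1 p hpmem
      have hz := (KEY (li i) p (hPiF i u huS p hpmem)).mp h0
      obtain ⟨k, hk1, hk2⟩ := Filter.nonempty_of_mem (Filter.inter_mem hz hne)
      exact hk2 hk1
  obtain ⟨i, hi⟩ := Set.mem_iUnion.mp (hsub hYC)
  exact hYnot i hi
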